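/- For the ladder diagram Λ(n_1,...,n_k;n), the number of edges on the roof equals Σ_{i=1}^{k} (n_{i+1} − n_{i−1}), and for each 1 ≤ i ≤ k there are exactly n_{i+1} − n_{i−1} special paths ending at the corner O_i. -/

import Mathlib

/-- A positive path on the ladder diagram `Λ(n_1,…,n_k;n)` (with `ν 0 = 0`,
`ν (k+1) = n`), encoded by the set `S ⊆ {1,…,n}` of its horizontal step positions: it runs
from `O_0` up/right towards one of the corners `O_j` (`1 ≤ j ≤ k`), so it has `ν j`
horizontal steps. -/
def PosPath (k n : ℕ) (ν : ℕ → ℕ) (S : Finset ℕ) : Prop :=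
  S ⊆ Finset.Icc 1 n ∧ ∃ j, 1 ≤ j ∧ j ≤ k ∧ S.card = ν j

/-- The edge from `(x,y)` to `(x+1,y)` (if `horiz`), resp. `(x,y)` to `(x,y+1)`, lies on
the path with horizontal step set `S` (coordinates based at `O_0`). -/
def edgeOnF (n : ℕ) (S : Finset ℕ) (horiz : Bool) (x y : ℕ) : Prop :=
  (S ∩ Finset.Icc 1 (x + y)).card = x ∧ x + y < n ∧
    (if horiz then (x + y + 1) ∈ S else (x + y + 1) ∉ S)

/-- The number of corners (direction changes) of the path with horizontal step set `S`. -/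
def cornersF (n : ℕ) (S : Finset ℕ) : ℕ :=
  ((Finset.Icc 1 (n - 1)).filter fun t => ¬(t ∈ S ↔ t + 1 ∈ S)).card

/-- The path `S` has a corner containing the given edge: the edge lies on `S` and an
adjacent step of the path has the other direction. -/
def hasCornerAt (n : ℕ) (S : Finset ℕ) (horiz : Bool) (x y : ℕ) : Prop :=
  edgeOnF n S horiz x y ∧
    ((2 ≤ x + y + 1 ∧ ¬((x + y) ∈ S ↔ (x + y + 1) ∈ S)) ∨
     (x + y + 2 ≤ n ∧ ¬((x + y + 1) ∈ S ↔ (x + y + 2) ∈ S)))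

/-- The edges on the roof of the ladder diagram `Λ(n_1,…,n_k;n)`: the upper-right staircase
part of the boundary, from `L_1 = (0, n − ν 1)` down to the corner `O_k`. -/
def RoofEdge (k n : ℕ) (ν : ℕ → ℕ) (horiz : Bool) (x y : ℕ) : Prop :=
  if horiz then ∃ l, 1 ≤ l ∧ l ≤ k ∧ y + ν l = n ∧ ν (l - 1) ≤ x ∧ x < ν l
  else ∃ l, 1 ≤ l ∧ l ≤ k ∧ x = ν l ∧ n ≤ y + ν (l + 1) ∧ y + ν l < n

/-- The special path associated with a roof edge `e` is the positive path with the fewest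
corners among those having a corner containing `e`; a path is special if it arises this
way from some roof edge. -/
def IsSpecialPath (k n : ℕ) (ν : ℕ → ℕ) (S : Finset ℕ) : Prop :=
  PosPath k n ν S ∧ ∃ (h : Bool) (x y : ℕ), RoofEdge k n ν h x y ∧
    hasCornerAt n S h x y ∧
    ∀ S', PosPath k n ν S' → hasCornerAt n S' h x y → cornersF n S ≤ cornersF n S'

lemma stepConst (S : Finset ℕ) {a b : ℕ} (hab : a ≤ b)
    (h : ∀ u, a ≤ u → u < b → ((u ∈ S) ↔ (u + 1 ∈ S))) : (a ∈ S) ↔ (b ∈ S) := by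
  induction b, hab using Nat.le_induction with
  | base => exact Iff.rfl
  | succ m hm ih =>
      exact (ih fun u hu hum => h u hu (by omega)).trans (h m hm (by omega))

lemma chgExists (S : Finset ℕ) {a b : ℕ} (hab : a ≤ b) (hne : ¬((a ∈ S) ↔ (b ∈ S))) :
    ∃ u, a ≤ u ∧ u < b ∧ ¬((u ∈ S) ↔ (u + 1 ∈ S)) := by
  by_contra h
  push_neg at h
  exact hne (stepConst S hab fun u hu hub => (h u hu hub))

lemma chg_sub (n : ℕ) (S T : Finset ℕ)
    (hT : ∀ u ∈ T, 1 ≤ u ∧ u ≤ n - 1 ∧ ¬(u ∈ S ↔ u + 1 ∈ S)) :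
    T.card ≤ cornersF n S := by
  apply Finset.card_le_card
  intro u hu
  obtain ⟨h1, h2, h3⟩ := hT u hu
  simp only [cornersF, Finset.mem_filter, Finset.mem_Icc]
  exact ⟨⟨h1, h2⟩, h3⟩

lemma pin2 {n : ℕ} {S : Finset ℕ} (hc : cornersF n S ≤ 2) {t1 t2 : ℕ}
    (h1 : 1 ≤ t1 ∧ t1 ≤ n - 1 ∧ ¬(t1 ∈ S ↔ t1 + 1 ∈ S))
    (h2 : 1 ≤ t2 ∧ t2 ≤ n - 1 ∧ ¬(t2 ∈ S ↔ t2 + 1 ∈ S))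
    (hne : t1 ≠ t2) :
    ∀ u, 1 ≤ u → u ≤ n - 1 → ¬(u ∈ S ↔ u + 1 ∈ S) → u = t1 ∨ u = t2 := by
  intro u hu1 hu2 hcu
  by_contra h'
  push_neg at h'
  have hsub := chg_sub n S {u, t1, t2} (by
    intro v hv
    simp only [Finset.mem_insert, Finset.mem_singleton] at hv
    rcases hv with rfl | rfl | rfl
    exacts [⟨hu1, hu2, hcu⟩, h1, h2])
  have hcard : ({u, t1, t2} : Finset ℕ).card = 3 := by
    rw [Finset.card_insert_of_notMem (by simp [h'.1, h'.2]),
      Finset.card_insert_of_notMem (by simp [hne])]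
    rfl
  omega

lemma pin1 {n : ℕ} {S : Finset ℕ} (hc : cornersF n S ≤ 1) {t1 : ℕ}
    (h1 : 1 ≤ t1 ∧ t1 ≤ n - 1 ∧ ¬(t1 ∈ S ↔ t1 + 1 ∈ S)) :
    ∀ u, 1 ≤ u → u ≤ n - 1 → ¬(u ∈ S ↔ u + 1 ∈ S) → u = t1 := by
  intro u hu1 hu2 hcu
  by_contra h'
  have hsub := chg_sub n S {u, t1} (by
    intro v hv
    simp only [Finset.mem_insert, Finset.mem_singleton] at hv
    rcases hv with rfl | rfl
    exacts [⟨hu1, hu2, hcu⟩, h1])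
  have hcard : ({u, t1} : Finset ℕ).card = 2 := by
    rw [Finset.card_insert_of_notMem (by simp [h'])]; rfl
  omega

lemma nu_mono {k : ℕ} {ν : ℕ → ℕ} (hmono : ∀ i ≤ k, ν i < ν (i + 1)) :
    ∀ {a b : ℕ}, a ≤ b → b ≤ k + 1 → ν a ≤ ν b := by
  intro a b hab hbk
  induction b, hab using Nat.le_induction with
  | base => exact le_rfl
  | succ m hm ih => exact le_trans (ih (by omega)) (le_of_lt (hmono m (by omega)))

lemma nu_strict {k : ℕ} {ν : ℕ → ℕ} (hmono : ∀ i ≤ k, ν i < ν (i + 1)) :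
    ∀ {a b : ℕ}, a < b → b ≤ k + 1 → ν a < ν b := by
  intro a b hab hbk
  have h1 : ν a < ν (a + 1) := hmono a (by omega)
  have h2 : ν (a + 1) ≤ ν b := nu_mono hmono (by omega) hbk
  omega

lemma huniq {k n : ℕ} {ν : ℕ → ℕ} (hν0 : ν 0 = 0) (hνtop : ν (k + 1) = n)
    (hmono : ∀ i ≤ k, ν i < ν (i + 1)) {l x : ℕ} (hl1 : 1 ≤ l) (hlk : l ≤ k)
    (hx1 : ν (l - 1) ≤ x) (hx2 : x < ν l) {S : Finset ℕ} (hP : PosPath k n ν S)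
    (hC : hasCornerAt n S true x (n - ν l)) (hc : cornersF n S ≤ 2) :
    S = Finset.Icc 1 x ∪ Finset.Icc (x + (n - ν l) + 1) n := by
  have hS := hP.1
  obtain ⟨j, hj1, hjk, hcardS⟩ := hP.2
  obtain ⟨⟨hcard, hxy, hmem0⟩, hadj⟩ := hC
  have hmem : x + (n - ν l) + 1 ∈ S := by simpa using hmem0
  have hln : ν l < n := by
    have h1 := hmono l hlk
    have h2 : ν (l + 1) ≤ ν (k + 1) := nu_mono hmono (by omega) le_rfl
    omega
  have hν1 : 1 ≤ ν 1 := by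
    have := nu_strict hmono (show 0 < 1 by omega) (by omega)
    omega
  have hνl1 : 1 ≤ ν l := le_trans hν1 (nu_mono hmono hl1 (by omega))
  have hjn : ν 1 ≤ ν j := nu_mono hmono hj1 (by omega)
  have hSmem : ∀ m ∈ S, 1 ≤ m ∧ m ≤ n := fun m hm => Finset.mem_Icc.mp (hS hm)
  -- there is a non-member below x + (n - ν l)
  have hb : ∃ b, 1 ≤ b ∧ b ≤ x + (n - ν l) ∧ b ∉ S := by
    by_contra hbn
    push_neg at hbn
    have hsub : Finset.Icc 1 (x + (n - ν l)) ⊆ S := fun m hm => by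
      have := Finset.mem_Icc.mp hm; exact hbn m this.1 this.2
    rw [Finset.inter_eq_right.mpr hsub, Nat.card_Icc] at hcard
    omega
  rcases Nat.eq_zero_or_pos x with rfl | hx0
  · -- x = 0
    have hl : l = 1 := by
      by_contra hne
      have h2 : 2 ≤ l := by omega
      have := nu_mono hmono (show 1 ≤ l - 1 by omega) (by omega)
      omega
    have h0 : S ∩ Finset.Icc 1 (0 + (n - ν l)) = ∅ := Finset.card_eq_zero.mp hcard
    have hemp : ∀ m, 1 ≤ m → m ≤ 0 + (n - ν l) → m ∉ S := by
      intro m h1 h2 hmS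
      have : m ∈ (∅ : Finset ℕ) := h0 ▸ Finset.mem_inter.mpr ⟨hmS, Finset.mem_Icc.mpr ⟨h1, h2⟩⟩
      simp at this
    have hchg0 : ¬(0 + (n - ν l) ∈ S ↔ 0 + (n - ν l) + 1 ∈ S) := by
      have h1 : 0 + (n - ν l) ∉ S := hemp _ (by omega) (by omega)
      tauto
    by_cases hcc : ∃ c, 0 + (n - ν l) + 1 ≤ c ∧ c ≤ n - 1 ∧ ¬(c ∈ S ↔ c + 1 ∈ S)
    · obtain ⟨c, hc1, hc2, hc3⟩ := hcc
      have hpin := pin2 hc ⟨by omega, by omega, hchg0⟩ ⟨by omega, by omega, hc3⟩ (by omega)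
      have hcS : c ∈ S := by
        refine (stepConst S hc1 (fun u hu hub => ?_)).mp hmem
        by_contra hne
        rcases hpin u (by omega) (by omega) hne with h | h <;> omega
      have hc1S : c + 1 ∉ S := fun h => hc3 (iff_of_true hcS h)
      have hSe : S = Finset.Icc (0 + (n - ν l) + 1) c := by
        ext m
        simp only [Finset.mem_Icc]
        constructor
        · intro hmS
          obtain ⟨hm1, hmn⟩ := hSmem m hmS
          constructor
          · by_contra h'
            exact hemp m hm1 (by omega) hmS
          · by_contra h'
            have := stepConst S (show c + 1 ≤ m by omega) (fun u hu hub => by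
              by_contra hne
              rcases hpin u (by omega) (by omega) hne with h | h <;> omega)
            exact hc1S (this.mpr hmS)
        · rintro ⟨hm1, hm2⟩
          refine (stepConst S hm1 (fun u hu hub => ?_)).mp hmem
          by_contra hne
          rcases hpin u (by omega) (by omega) hne with h | h <;> omega
      rw [hSe, Nat.card_Icc] at hcardS
      have : ν l ≤ ν j := by rw [hl]; exact hjn
      omega
    · push_neg at hcc
      ext m
      simp only [Finset.mem_union, Finset.mem_Icc]
      constructor
      · intro hmS
        obtain ⟨hm1, hmn⟩ := hSmem m hmS
        right
        refine ⟨?_, hmn⟩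
        by_contra h'
        exact hemp m hm1 (by omega) hmS
      · rintro (⟨h1, h2⟩ | ⟨h1, h2⟩)
        · omega
        · exact (stepConst S h1 (fun u hu hub => hcc u hu (by omega))).mp hmem
  · -- x ≥ 1
    have ha : ∃ a, a ∈ S ∧ 1 ≤ a ∧ a ≤ x + (n - ν l) := by
      have hpos : 0 < (S ∩ Finset.Icc 1 (x + (n - ν l))).card := by omega
      obtain ⟨a, haa⟩ := Finset.card_pos.mp hpos
      have := Finset.mem_inter.mp haa
      exact ⟨a, this.1, (Finset.mem_Icc.mp this.2).1, (Finset.mem_Icc.mp this.2).2⟩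
    obtain ⟨a, haS, ha1, ha2⟩ := ha
    rcases hadj with ⟨h2t, hch⟩ | ⟨h2n, hch⟩
    · -- corner on the left of the edge
      have hu0 : x + (n - ν l) ∉ S := fun h => hch (iff_of_true h hmem)
      have ha' : a < x + (n - ν l) := lt_of_le_of_ne ha2 (fun h => hu0 (h ▸ haS))
      obtain ⟨c, hc1e, hc2e, hc3e⟩ := chgExists S (le_of_lt ha') (fun h => hu0 (h.mp haS))
      have hpin := pin2 hc ⟨by omega, by omega, hc3e⟩ ⟨by omega, by omega, hch⟩ (by omega)
      have hc1n : c + 1 ∉ S := by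
        have := stepConst S (show c + 1 ≤ x + (n - ν l) by omega) (fun u hu hub => by
          by_contra hne
          rcases hpin u (by omega) (by omega) hne with h | h <;> omega)
        exact fun h => hu0 (this.mp h)
      have hcS : c ∈ S := by tauto
      have hSform : S = Finset.Icc 1 c ∪ Finset.Icc (x + (n - ν l) + 1) n := by
        ext m
        simp only [Finset.mem_union, Finset.mem_Icc]
        constructor
        · intro hmS
          obtain ⟨hm1, hmn⟩ := hSmem m hmS
          rcases le_or_gt m c with h | h
          · exact Or.inl ⟨hm1, h⟩
          · rcases le_or_gt m (x + (n - ν l)) with h' | h'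
            · exfalso
              have := stepConst S h' (fun u hu hub => by
                by_contra hne
                rcases hpin u (by omega) (by omega) hne with hh | hh <;> omega)
              exact hu0 (this.mp hmS)
            · exact Or.inr ⟨by omega, hmn⟩
        · rintro (⟨h1, h2⟩ | ⟨h1, h2⟩)
          · refine (stepConst S h2 (fun u hu hub => ?_)).mpr hcS
            by_contra hne
            rcases hpin u (by omega) (by omega) hne with h | h <;> omega
          · refine (stepConst S h1 (fun u hu hub => ?_)).mp hmem
            by_contra hne
            rcases hpin u (by omega) (by omega) hne with h | h <;> omega
      have hint : S ∩ Finset.Icc 1 (x + (n - ν l)) = Finset.Icc 1 c := by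
        rw [hSform]
        ext m
        simp only [Finset.mem_inter, Finset.mem_union, Finset.mem_Icc]
        omega
      rw [hint, Nat.card_Icc] at hcard
      have hcx : c = x := by omega
      rw [hSform, hcx]
    · -- corner on the right of the edge
      have e2 : x + (n - ν l) + 2 = (x + (n - ν l) + 1) + 1 := by omega
      rw [e2] at hch
      have ht1 : x + (n - ν l) + 1 + 1 ∉ S := fun h => hch (iff_of_true hmem h)
      by_cases hu0 : x + (n - ν l) ∈ S
      · obtain ⟨b, hb1, hb2, hb3⟩ := hb
        have hb' : b < x + (n - ν l) := lt_of_le_of_ne hb2 (fun h => hb3 (h ▸ hu0))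
        obtain ⟨c, hc1e, hc2e, hc3e⟩ := chgExists S (le_of_lt hb') (fun h => hb3 (h.mpr hu0))
        have hpin := pin2 hc ⟨by omega, by omega, hc3e⟩ ⟨by omega, by omega, hch⟩ (by omega)
        have hc1S : c + 1 ∈ S := by
          have := stepConst S (show c + 1 ≤ x + (n - ν l) by omega) (fun u hu hub => by
            by_contra hne
            rcases hpin u (by omega) (by omega) hne with h | h <;> omega)
          exact this.mpr hu0
        have hcS : c ∉ S := fun h => hc3e (iff_of_true h hc1S)
        have hSform : S = Finset.Icc (c + 1) (x + (n - ν l) + 1) := by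
          ext m
          simp only [Finset.mem_Icc]
          constructor
          · intro hmS
            obtain ⟨hm1, hmn⟩ := hSmem m hmS
            constructor
            · by_contra h'
              have := stepConst S (show m ≤ c by omega) (fun u hu hub => by
                by_contra hne
                rcases hpin u (by omega) (by omega) hne with h | h <;> omega)
              exact hcS (this.mp hmS)
            · by_contra h'
              have := stepConst S (show x + (n - ν l) + 1 + 1 ≤ m by omega) (fun u hu hub => by
                by_contra hne
                rcases hpin u (by omega) (by omega) hne with h | h <;> omega)
              exact ht1 (this.mpr hmS)
          · rintro ⟨h1, h2⟩
            refine (stepConst S h2 (fun u hu hub => ?_)).mpr hmem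
            by_contra hne
            rcases hpin u (by omega) (by omega) hne with h | h <;> omega
        have hint : S ∩ Finset.Icc 1 (x + (n - ν l)) = Finset.Icc (c + 1) (x + (n - ν l)) := by
          rw [hSform]
          ext m
          simp only [Finset.mem_inter, Finset.mem_Icc]
          omega
        rw [hint, Nat.card_Icc] at hcard
        rw [hSform, Nat.card_Icc] at hcardS
        -- hcard : x + (n - ν l) + 1 - (c + 1) = x, so c = n - ν l; hcardS : x + 1 = ν j
        exfalso
        rcases le_or_gt j (l - 1) with hj | hj
        · have : ν j ≤ ν (l - 1) := nu_mono hmono hj (by omega)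
          omega
        · have : ν l ≤ ν j := nu_mono hmono (by omega) (by omega)
          omega
      · -- three changes, contradiction
        have ha' : a < x + (n - ν l) := lt_of_le_of_ne ha2 (fun h => hu0 (h ▸ haS))
        obtain ⟨c, hc1e, hc2e, hc3e⟩ := chgExists S (le_of_lt ha') (fun h => hu0 (h.mp haS))
        have hchgU : ¬(x + (n - ν l) ∈ S ↔ x + (n - ν l) + 1 ∈ S) := by tauto
        have hsub := chg_sub n S {c, x + (n - ν l), x + (n - ν l) + 1} (by
          intro v hv
          simp only [Finset.mem_insert, Finset.mem_singleton] at hv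
          rcases hv with rfl | rfl | rfl
          exacts [⟨by omega, by omega, hc3e⟩, ⟨by omega, by omega, hchgU⟩,
            ⟨by omega, by omega, hch⟩])
        have hcard3 : ({c, x + (n - ν l), x + (n - ν l) + 1} : Finset ℕ).card = 3 :=
          Finset.card_eq_three.mpr ⟨_, _, _, by omega, by omega, by omega, rfl⟩
        omega

lemma vuniq {k n : ℕ} {ν : ℕ → ℕ} (hν0 : ν 0 = 0) (hνtop : ν (k + 1) = n)
    (hmono : ∀ i ≤ k, ν i < ν (i + 1)) {l y : ℕ} (hl1 : 1 ≤ l) (hlk : l ≤ k)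
    (hy1 : n ≤ y + ν (l + 1)) (hy2 : y + ν l < n) {S : Finset ℕ} (hP : PosPath k n ν S)
    (hC : hasCornerAt n S false (ν l) y)
    (hc : cornersF n S ≤ if y = 0 then 1 else 2) :
    S = Finset.Icc (y + 1) (y + ν l) := by
  have hS := hP.1
  obtain ⟨j, hj1, hjk, hcardS⟩ := hP.2
  obtain ⟨⟨hcard, hxy, hmem0⟩, hadj⟩ := hC
  have hmem : ν l + y + 1 ∉ S := by simpa using hmem0
  have hln : ν l < n := by omega
  have hν1 : 1 ≤ ν 1 := by
    have := nu_strict hmono (show 0 < 1 by omega) (by omega)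
    omega
  have hνl1 : 1 ≤ ν l := le_trans hν1 (nu_mono hmono hl1 (by omega))
  have hνl1n : ν (l + 1) ≤ n := by
    rw [← hνtop]; exact nu_mono hmono (by omega) le_rfl
  have hSmem : ∀ m ∈ S, 1 ≤ m ∧ m ≤ n := fun m hm => Finset.mem_Icc.mp (hS hm)
  have ha : ∃ a, a ∈ S ∧ 1 ≤ a ∧ a ≤ ν l + y := by
    have hpos : 0 < (S ∩ Finset.Icc 1 (ν l + y)).card := by omega
    obtain ⟨a, haa⟩ := Finset.card_pos.mp hpos
    have := Finset.mem_inter.mp haa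
    exact ⟨a, this.1, (Finset.mem_Icc.mp this.2).1, (Finset.mem_Icc.mp this.2).2⟩
  obtain ⟨a, haS, ha1, ha2⟩ := ha
  rcases hadj with ⟨h2t, hch⟩ | ⟨h2n, hch⟩
  · -- corner below the edge : ν l + y ∈ S
    have hu0 : ν l + y ∈ S := by tauto
    rcases Nat.eq_zero_or_pos y with rfl | hy0
    · -- y = 0
      rw [if_pos rfl] at hc
      have hpin := pin1 hc ⟨by omega, by omega, hch⟩
      ext m
      simp only [Finset.mem_Icc]
      constructor
      · intro hmS
        obtain ⟨hm1, hmn⟩ := hSmem m hmS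
        refine ⟨by omega, ?_⟩
        by_contra h'
        have := stepConst S (show ν l + 0 + 1 ≤ m by omega) (fun u hu hub => by
          by_contra hne
          have := hpin u (by omega) (by omega) hne
          omega)
        exact hmem (this.mpr hmS)
      · rintro ⟨hm1, hm2⟩
        refine (stepConst S (show m ≤ ν l + 0 by omega) (fun u hu hub => ?_)).mpr hu0
        by_contra hne
        have := hpin u (by omega) (by omega) hne
        omega
    · -- y ≥ 1
      rw [if_neg (by omega)] at hc
      have hb : ∃ b, 1 ≤ b ∧ b ≤ ν l + y ∧ b ∉ S := by
        by_contra hbn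
        push_neg at hbn
        have hsub : Finset.Icc 1 (ν l + y) ⊆ S := fun m hm => by
          have := Finset.mem_Icc.mp hm; exact hbn m this.1 this.2
        rw [Finset.inter_eq_right.mpr hsub, Nat.card_Icc] at hcard
        omega
      obtain ⟨b, hb1, hb2, hb3⟩ := hb
      have hb' : b < ν l + y := lt_of_le_of_ne hb2 (fun h => hb3 (h ▸ hu0))
      obtain ⟨c, hc1e, hc2e, hc3e⟩ := chgExists S (le_of_lt hb') (fun h => hb3 (h.mpr hu0))
      have hpin := pin2 hc ⟨by omega, by omega, hc3e⟩ ⟨by omega, by omega, hch⟩ (by omega)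
      have hc1S : c + 1 ∈ S := by
        have := stepConst S (show c + 1 ≤ ν l + y by omega) (fun u hu hub => by
          by_contra hne
          rcases hpin u (by omega) (by omega) hne with h | h <;> omega)
        exact this.mpr hu0
      have hcS : c ∉ S := fun h => hc3e (iff_of_true h hc1S)
      have hSform : S = Finset.Icc (c + 1) (ν l + y) := by
        ext m
        simp only [Finset.mem_Icc]
        constructor
        · intro hmS
          obtain ⟨hm1, hmn⟩ := hSmem m hmS
          constructor
          · by_contra h'
            have := stepConst S (show m ≤ c by omega) (fun u hu hub => by
              by_contra hne
              rcases hpin u (by omega) (by omega) hne with h | h <;> omega)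
            exact hcS (this.mp hmS)
          · by_contra h'
            have := stepConst S (show ν l + y + 1 ≤ m by omega) (fun u hu hub => by
              by_contra hne
              rcases hpin u (by omega) (by omega) hne with h | h <;> omega)
            exact hmem (this.mpr hmS)
        · rintro ⟨h1, h2⟩
          refine (stepConst S h2 (fun u hu hub => ?_)).mpr hu0
          by_contra hne
          rcases hpin u (by omega) (by omega) hne with h | h <;> omega
      have hint : S ∩ Finset.Icc 1 (ν l + y) = S := by
        rw [hSform]
        ext m
        simp only [Finset.mem_inter, Finset.mem_Icc]
        omega
      rw [hint, hSform, Nat.card_Icc] at hcard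
      have hcy : c = y := by omega
      rw [hSform, hcy, Nat.add_comm (ν l) y]
  · -- corner above the edge : ν l + y + 2 ∈ S
    have e2 : ν l + y + 2 = ν l + y + 1 + 1 := by omega
    rw [e2] at hch
    have ht1 : ν l + y + 1 + 1 ∈ S := by tauto
    have ha' : a < ν l + y + 1 := by omega
    obtain ⟨c, hc1e, hc2e, hc3e⟩ := chgExists S ha'.le (fun h => hmem (h.mp haS))
    rcases Nat.eq_zero_or_pos y with rfl | hy0
    · rw [if_pos rfl] at hc
      have hsub := chg_sub n S {c, ν l + 0 + 1} (by
        intro v hv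
        simp only [Finset.mem_insert, Finset.mem_singleton] at hv
        rcases hv with rfl | rfl
        exacts [⟨by omega, by omega, hc3e⟩, ⟨by omega, by omega, hch⟩])
      have hcard2 : ({c, ν l + 0 + 1} : Finset ℕ).card = 2 := Finset.card_pair (by omega)
      omega
    · rw [if_neg (by omega)] at hc
      have hpin := pin2 hc ⟨by omega, by omega, hc3e⟩ ⟨by omega, by omega, hch⟩ (by omega)
      have hc1n : c + 1 ∉ S := by
        have := stepConst S (show c + 1 ≤ ν l + y + 1 by omega) (fun u hu hub => by
          by_contra hne
          rcases hpin u (by omega) (by omega) hne with h | h <;> omega)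
        exact fun h => hmem (this.mp h)
      have hcS : c ∈ S := by tauto
      have hSform : S = Finset.Icc 1 c ∪ Finset.Icc (ν l + y + 1 + 1) n := by
        ext m
        simp only [Finset.mem_union, Finset.mem_Icc]
        constructor
        · intro hmS
          obtain ⟨hm1, hmn⟩ := hSmem m hmS
          rcases le_or_gt m c with h | h
          · exact Or.inl ⟨hm1, h⟩
          · rcases le_or_gt m (ν l + y + 1) with h' | h'
            · exfalso
              have := stepConst S h' (fun u hu hub => by
                by_contra hne
                rcases hpin u (by omega) (by omega) hne with hh | hh <;> omega)
              exact hmem (this.mp hmS)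
            · exact Or.inr ⟨by omega, hmn⟩
        · rintro (⟨h1, h2⟩ | ⟨h1, h2⟩)
          · refine (stepConst S h2 (fun u hu hub => ?_)).mpr hcS
            by_contra hne
            rcases hpin u (by omega) (by omega) hne with h | h <;> omega
          · refine (stepConst S h1 (fun u hu hub => ?_)).mp ht1
            by_contra hne
            rcases hpin u (by omega) (by omega) hne with h | h <;> omega
      have hint : S ∩ Finset.Icc 1 (ν l + y) = Finset.Icc 1 c := by
        rw [hSform]
        ext m
        simp only [Finset.mem_inter, Finset.mem_union, Finset.mem_Icc]
        omega
      rw [hint, Nat.card_Icc] at hcard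
      have hdisj : Disjoint (Finset.Icc 1 c) (Finset.Icc (ν l + y + 1 + 1) n) := by
        simp only [Finset.disjoint_left, Finset.mem_Icc]
        omega
      rw [hSform, Finset.card_union_of_disjoint hdisj, Nat.card_Icc, Nat.card_Icc] at hcardS
      -- hcardS : c + (n + 1 - (ν l + y + 1 + 1)) = ν j ; c = ν l
      exfalso
      rcases le_or_gt j l with hj | hj
      · have : ν j ≤ ν l := nu_mono hmono hj (by omega)
        omega
      · have : ν (l + 1) ≤ ν j := nu_mono hmono hj (by omega)
        omega

lemma hspec {k n : ℕ} {ν : ℕ → ℕ} (hν0 : ν 0 = 0) (hνtop : ν (k + 1) = n)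
    (hmono : ∀ i ≤ k, ν i < ν (i + 1)) {l x : ℕ} (hl1 : 1 ≤ l) (hlk : l ≤ k)
    (hx1 : ν (l - 1) ≤ x) (hx2 : x < ν l) :
    (Finset.Icc 1 x ∪ Finset.Icc (x + (n - ν l) + 1) n).card = ν l ∧
    PosPath k n ν (Finset.Icc 1 x ∪ Finset.Icc (x + (n - ν l) + 1) n) ∧
    hasCornerAt n (Finset.Icc 1 x ∪ Finset.Icc (x + (n - ν l) + 1) n) true x (n - ν l) ∧
    cornersF n (Finset.Icc 1 x ∪ Finset.Icc (x + (n - ν l) + 1) n) ≤ 2 := by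
  have hln : ν l < n := by
    have h1 := hmono l hlk
    have h2 : ν (l + 1) ≤ ν (k + 1) := nu_mono hmono (by omega) le_rfl
    omega
  set T := Finset.Icc 1 x ∪ Finset.Icc (x + (n - ν l) + 1) n with hT
  have hmemT : ∀ m, m ∈ T ↔ (1 ≤ m ∧ m ≤ x) ∨ (x + (n - ν l) + 1 ≤ m ∧ m ≤ n) := by
    intro m
    simp [hT, Finset.mem_union, Finset.mem_Icc]
  have hdisj : Disjoint (Finset.Icc 1 x) (Finset.Icc (x + (n - ν l) + 1) n) := by
    simp only [Finset.disjoint_left, Finset.mem_Icc]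
    omega
  have hcardT : T.card = ν l := by
    rw [hT, Finset.card_union_of_disjoint hdisj, Nat.card_Icc, Nat.card_Icc]
    omega
  refine ⟨hcardT, ⟨?_, l, hl1, hlk, hcardT⟩, ⟨⟨?_, by omega, ?_⟩, Or.inl ⟨by omega, ?_⟩⟩, ?_⟩
  · intro m hm
    rw [hmemT] at hm
    simp only [Finset.mem_Icc]
    omega
  · have : T ∩ Finset.Icc 1 (x + (n - ν l)) = Finset.Icc 1 x := by
      ext m
      simp only [Finset.mem_inter, hmemT, Finset.mem_Icc]
      omega
    rw [this, Nat.card_Icc]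
    omega
  · have : x + (n - ν l) + 1 ∈ T := by rw [hmemT]; omega
    simpa using this
  · have h1 : x + (n - ν l) ∉ T := by rw [hmemT]; omega
    have h2 : x + (n - ν l) + 1 ∈ T := by rw [hmemT]; omega
    tauto
  · have hsub : (Finset.Icc 1 (n - 1)).filter (fun t => ¬(t ∈ T ↔ t + 1 ∈ T)) ⊆
        {x, x + (n - ν l)} := by
      intro u hu
      simp only [Finset.mem_filter, Finset.mem_Icc, hmemT] at hu
      simp only [Finset.mem_insert, Finset.mem_singleton]
      omega
    exact le_trans (Finset.card_le_card hsub)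
      (le_trans (Finset.card_insert_le _ _) (by simp))

lemma vspec {k n : ℕ} {ν : ℕ → ℕ} (hν0 : ν 0 = 0) (hνtop : ν (k + 1) = n)
    (hmono : ∀ i ≤ k, ν i < ν (i + 1)) {l y : ℕ} (hl1 : 1 ≤ l) (hlk : l ≤ k)
    (hy1 : n ≤ y + ν (l + 1)) (hy2 : y + ν l < n) :
    (Finset.Icc (y + 1) (y + ν l)).card = ν l ∧
    PosPath k n ν (Finset.Icc (y + 1) (y + ν l)) ∧
    hasCornerAt n (Finset.Icc (y + 1) (y + ν l)) false (ν l) y ∧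
    cornersF n (Finset.Icc (y + 1) (y + ν l)) ≤ if y = 0 then 1 else 2 := by
  have hν1 : 1 ≤ ν 1 := by
    have := nu_strict hmono (show 0 < 1 by omega) (by omega)
    omega
  have hνl1 : 1 ≤ ν l := le_trans hν1 (nu_mono hmono hl1 (by omega))
  set T := Finset.Icc (y + 1) (y + ν l) with hT
  have hmemT : ∀ m, m ∈ T ↔ y + 1 ≤ m ∧ m ≤ y + ν l := by
    intro m
    simp [hT, Finset.mem_Icc]
  have hcardT : T.card = ν l := by rw [hT, Nat.card_Icc]; omega
  refine ⟨hcardT, ⟨?_, l, hl1, hlk, hcardT⟩, ⟨⟨?_, by omega, ?_⟩, Or.inl ⟨by omega, ?_⟩⟩, ?_⟩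
  · intro m hm
    rw [hmemT] at hm
    simp only [Finset.mem_Icc]
    omega
  · have : T ∩ Finset.Icc 1 (ν l + y) = T := by
      ext m
      simp only [Finset.mem_inter, hmemT, Finset.mem_Icc]
      omega
    rw [this, hcardT]
  · have : ν l + y + 1 ∉ T := by rw [hmemT]; omega
    simpa using this
  · have h1 : ν l + y ∈ T := by rw [hmemT]; omega
    have h2 : ν l + y + 1 ∉ T := by rw [hmemT]; omega
    tauto
  · by_cases hy : y = 0
    · have hsub : (Finset.Icc 1 (n - 1)).filter (fun t => ¬(t ∈ T ↔ t + 1 ∈ T)) ⊆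
          {y + ν l} := by
        intro u hu
        simp only [Finset.mem_filter, Finset.mem_Icc, hmemT] at hu
        simp only [Finset.mem_singleton]
        omega
      rw [if_pos hy]
      exact le_trans (Finset.card_le_card hsub) (by simp)
    · have hsub : (Finset.Icc 1 (n - 1)).filter (fun t => ¬(t ∈ T ↔ t + 1 ∈ T)) ⊆
          {y, y + ν l} := by
        intro u hu
        simp only [Finset.mem_filter, Finset.mem_Icc, hmemT] at hu
        simp only [Finset.mem_insert, Finset.mem_singleton]
        omega
      rw [if_neg hy]
      exact le_trans (Finset.card_le_card hsub)
        (le_trans (Finset.card_insert_le _ _) (by simp))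

def Ffin (k n : ℕ) (ν : ℕ → ℕ) (i : ℕ) : Finset (Finset ℕ) :=
  ((Finset.Ico (ν (i - 1)) (ν i)).image
      fun x => Finset.Icc 1 x ∪ Finset.Icc (x + (n - ν i) + 1) n) ∪
  ((Finset.Ico (n - ν (i + 1)) (n - ν i)).image
      fun y => Finset.Icc (y + 1) (y + ν i))

lemma special_iff {k n : ℕ} {ν : ℕ → ℕ} (hν0 : ν 0 = 0) (hνtop : ν (k + 1) = n)
    (hmono : ∀ i ≤ k, ν i < ν (i + 1)) {i : ℕ} (hi1 : 1 ≤ i) (hik : i ≤ k) (S : Finset ℕ) :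
    (S ⊆ Finset.Icc 1 n ∧ S.card = ν i ∧ IsSpecialPath k n ν S) ↔ S ∈ Ffin k n ν i := by
  constructor
  · rintro ⟨hsub, hcardi, hPS, b, x, y, hRoof, hCorn, hmin⟩
    cases b
    · -- vertical edge
      rw [RoofEdge, if_neg (by simp)] at hRoof
      obtain ⟨l, hl1, hlk, hx, hy1, hy2⟩ := hRoof
      subst hx
      obtain ⟨hcT, hPT, hCT, hbT⟩ := vspec hν0 hνtop hmono hl1 hlk hy1 hy2
      have hcS : cornersF n S ≤ if y = 0 then 1 else 2 :=
        le_trans (hmin _ hPT hCT) hbT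
      have hSe := vuniq hν0 hνtop hmono hl1 hlk hy1 hy2 hPS hCorn hcS
      have hli : l = i := by
        by_contra hne
        rcases lt_or_gt_of_ne hne with h | h
        · have := nu_strict hmono h (by omega)
          rw [hSe, Nat.card_Icc] at hcardi
          omega
        · have := nu_strict hmono h (by omega)
          rw [hSe, Nat.card_Icc] at hcardi
          omega
      subst hli
      apply Finset.mem_union_right
      exact Finset.mem_image.mpr ⟨y, Finset.mem_Ico.mpr ⟨by omega, by omega⟩, hSe.symm⟩
    · -- horizontal edge
      rw [RoofEdge, if_pos (by simp)] at hRoof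
      obtain ⟨l, hl1, hlk, hyl, hx1, hx2⟩ := hRoof
      have hy : y = n - ν l := by omega
      subst hy
      obtain ⟨hcT, hPT, hCT, hbT⟩ := hspec hν0 hνtop hmono hl1 hlk hx1 hx2
      have hcS : cornersF n S ≤ 2 := le_trans (hmin _ hPT hCT) hbT
      have hSe := huniq hν0 hνtop hmono hl1 hlk hx1 hx2 hPS hCorn hcS
      have hli : l = i := by
        by_contra hne
        rcases lt_or_gt_of_ne hne with h | h
        · have := nu_strict hmono h (by omega)
          rw [hSe] at hcardi
          rw [hcardi] at hcT
          omega
        · have := nu_strict hmono h (by omega)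
          rw [hSe] at hcardi
          rw [hcardi] at hcT
          omega
      subst hli
      apply Finset.mem_union_left
      exact Finset.mem_image.mpr ⟨x, Finset.mem_Ico.mpr ⟨hx1, hx2⟩, hSe.symm⟩
  · intro hmem
    rcases Finset.mem_union.mp hmem with h | h
    · obtain ⟨x, hx, rfl⟩ := Finset.mem_image.mp h
      rw [Finset.mem_Ico] at hx
      obtain ⟨hcT, hPT, hCT, hbT⟩ := hspec hν0 hνtop hmono hi1 hik hx.1 hx.2
      refine ⟨hPT.1, hcT, hPT, true, x, n - ν i, ?_, hCT, ?_⟩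
      · rw [RoofEdge, if_pos (by simp)]
        have hln : ν i < n := by
          have h1 := hmono i hik
          have h2 : ν (i + 1) ≤ ν (k + 1) := nu_mono hmono (by omega) le_rfl
          omega
        exact ⟨i, hi1, hik, by omega, hx.1, hx.2⟩
      · intro S' hP' hC'
        by_contra hlt
        push_neg at hlt
        have hc' : cornersF n S' ≤ 2 := by omega
        have := huniq hν0 hνtop hmono hi1 hik hx.1 hx.2 hP' hC' hc'
        rw [this] at hlt
        omega
    · obtain ⟨y, hy, rfl⟩ := Finset.mem_image.mp h
      rw [Finset.mem_Ico] at hy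
      have hνi1n : ν (i + 1) ≤ n := by
        rw [← hνtop]; exact nu_mono hmono (by omega) le_rfl
      have hy1 : n ≤ y + ν (i + 1) := by omega
      have hy2 : y + ν i < n := by
        have h1 := hmono i hik
        omega
      obtain ⟨hcT, hPT, hCT, hbT⟩ := vspec hν0 hνtop hmono hi1 hik hy1 hy2
      refine ⟨hPT.1, hcT, hPT, false, ν i, y, ?_, hCT, ?_⟩
      · rw [RoofEdge, if_neg (by simp)]
        exact ⟨i, hi1, hik, rfl, hy1, hy2⟩
      · intro S' hP' hC'
        by_contra hlt
        push_neg at hlt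
        have hc' : cornersF n S' ≤ if y = 0 then 1 else 2 := by
          rcases le_or_gt (cornersF n (Finset.Icc (y + 1) (y + ν i))) (if y = 0 then 1 else 2)
            with hh | hh
          · omega
          · omega
        have := vuniq hν0 hνtop hmono hi1 hik hy1 hy2 hP' hC' hc'
        rw [this] at hlt
        omega

lemma Ffin_card {k n : ℕ} {ν : ℕ → ℕ} (hν0 : ν 0 = 0) (hνtop : ν (k + 1) = n)
    (hmono : ∀ i ≤ k, ν i < ν (i + 1)) {i : ℕ} (hi1 : 1 ≤ i) (hik : i ≤ k) :
    (Ffin k n ν i).card = ν (i + 1) - ν (i - 1) := by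
  have h1 : ν (i - 1) < ν i := nu_strict hmono (by omega) (by omega)
  have h2 : ν i < ν (i + 1) := hmono i hik
  have h3 : ν (i + 1) ≤ n := by rw [← hνtop]; exact nu_mono hmono (by omega) le_rfl
  have hln : ν i < n := by omega
  have hdisj : Disjoint
      ((Finset.Ico (ν (i - 1)) (ν i)).image
        fun x => Finset.Icc 1 x ∪ Finset.Icc (x + (n - ν i) + 1) n)
      ((Finset.Ico (n - ν (i + 1)) (n - ν i)).image
        fun y => Finset.Icc (y + 1) (y + ν i)) := by
    simp only [Finset.disjoint_left, Finset.mem_image]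
    rintro T ⟨x, hx, rfl⟩ ⟨y, hy, heq⟩
    rw [Finset.mem_Ico] at hx hy
    have hn1 : n ∈ Finset.Icc 1 x ∪ Finset.Icc (x + (n - ν i) + 1) n := by
      simp only [Finset.mem_union, Finset.mem_Icc]
      omega
    rw [← heq] at hn1
    simp only [Finset.mem_union, Finset.mem_Icc] at hn1
    omega
  rw [Ffin, Finset.card_union_of_disjoint hdisj,
    Finset.card_image_of_injOn, Finset.card_image_of_injOn, Nat.card_Ico, Nat.card_Ico]
  · omega
  · intro y1 hy1 y2 hy2 heq
    simp only [Finset.coe_Ico, Set.mem_Ico] at hy1 hy2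
    dsimp only at heq
    by_contra hne
    rcases lt_or_gt_of_ne hne with h | h
    · have hm : y1 + 1 ∈ Finset.Icc (y1 + 1) (y1 + ν i) := by
        simp only [Finset.mem_Icc]; omega
      rw [heq] at hm
      simp only [Finset.mem_Icc] at hm
      omega
    · have hm : y2 + 1 ∈ Finset.Icc (y2 + 1) (y2 + ν i) := by
        simp only [Finset.mem_Icc]; omega
      rw [← heq] at hm
      simp only [Finset.mem_Icc] at hm
      omega
  · intro x1 hx1 x2 hx2 heq
    simp only [Finset.coe_Ico, Set.mem_Ico] at hx1 hx2
    dsimp only at heq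
    by_contra hne
    rcases lt_or_gt_of_ne hne with h | h
    · have hm : x1 + 1 ∈ Finset.Icc 1 x2 ∪ Finset.Icc (x2 + (n - ν i) + 1) n := by
        simp only [Finset.mem_union, Finset.mem_Icc]; omega
      rw [← heq] at hm
      simp only [Finset.mem_union, Finset.mem_Icc] at hm
      omega
    · have hm : x2 + 1 ∈ Finset.Icc 1 x1 ∪ Finset.Icc (x1 + (n - ν i) + 1) n := by
        simp only [Finset.mem_union, Finset.mem_Icc]; omega
      rw [heq] at hm
      simp only [Finset.mem_union, Finset.mem_Icc] at hm
      omega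

def Efin (k n : ℕ) (ν : ℕ → ℕ) : Finset (Bool × ℕ × ℕ) :=
  (Finset.Icc 1 k).biUnion fun l =>
    ((Finset.Ico (ν (l - 1)) (ν l)).image fun x => (true, x, n - ν l)) ∪
    ((Finset.Ico (n - ν (l + 1)) (n - ν l)).image fun y => (false, ν l, y))

lemma roof_iff {k n : ℕ} {ν : ℕ → ℕ} (hν0 : ν 0 = 0) (hνtop : ν (k + 1) = n)
    (hmono : ∀ i ≤ k, ν i < ν (i + 1)) (e : Bool × ℕ × ℕ) :
    RoofEdge k n ν e.1 e.2.1 e.2.2 ↔ e ∈ Efin k n ν := by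
  obtain ⟨b, x, y⟩ := e
  have hub : ∀ l, l ≤ k → ν l < n := by
    intro l hl
    have h1 := hmono l hl
    have h2 : ν (l + 1) ≤ ν (k + 1) := nu_mono hmono (by omega) le_rfl
    omega
  have hub1 : ∀ l, l ≤ k + 1 → ν l ≤ n := by
    intro l hl
    rw [← hνtop]; exact nu_mono hmono hl le_rfl
  cases b
  · simp only [RoofEdge, if_neg (by simp : ¬(false = true))]
    constructor
    · rintro ⟨l, hl1, hlk, rfl, hy1, hy2⟩
      refine Finset.mem_biUnion.mpr ⟨l, Finset.mem_Icc.mpr ⟨hl1, hlk⟩,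
        Finset.mem_union_right _ (Finset.mem_image.mpr ⟨y, Finset.mem_Ico.mpr ⟨?_, ?_⟩, rfl⟩)⟩
      · omega
      · omega
    · intro hmem
      obtain ⟨l, hl, hm⟩ := Finset.mem_biUnion.mp hmem
      rw [Finset.mem_Icc] at hl
      rcases Finset.mem_union.mp hm with h | h
      · obtain ⟨x', _, heq⟩ := Finset.mem_image.mp h
        simp at heq
      · obtain ⟨y', hy', heq⟩ := Finset.mem_image.mp h
        rw [Finset.mem_Ico] at hy'
        have hx : x = ν l := by
          have := congrArg (fun p => p.2.1) heq
          simpa using this.symm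
        have hy : y = y' := by
          have := congrArg (fun p => p.2.2) heq
          simpa using this.symm
        subst hx hy
        have := hub1 (l + 1) (by omega)
        exact ⟨l, hl.1, hl.2, rfl, by omega, by omega⟩
  · simp only [RoofEdge, if_pos rfl]
    constructor
    · rintro ⟨l, hl1, hlk, hyl, hx1, hx2⟩
      have := hub l hlk
      refine Finset.mem_biUnion.mpr ⟨l, Finset.mem_Icc.mpr ⟨hl1, hlk⟩,
        Finset.mem_union_left _ (Finset.mem_image.mpr ⟨x, Finset.mem_Ico.mpr ⟨hx1, hx2⟩, ?_⟩)⟩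
      have : y = n - ν l := by omega
      rw [this]
    · intro hmem
      obtain ⟨l, hl, hm⟩ := Finset.mem_biUnion.mp hmem
      rw [Finset.mem_Icc] at hl
      rcases Finset.mem_union.mp hm with h | h
      · obtain ⟨x', hx', heq⟩ := Finset.mem_image.mp h
        rw [Finset.mem_Ico] at hx'
        have hx : x = x' := by
          have := congrArg (fun p => p.2.1) heq
          simpa using this.symm
        have hy : y = n - ν l := by
          have := congrArg (fun p => p.2.2) heq
          simpa using this.symm
        subst hx hy
        have := hub l hl.2
        exact ⟨l, hl.1, hl.2, by omega, hx'.1, hx'.2⟩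
      · obtain ⟨y', _, heq⟩ := Finset.mem_image.mp h
        simp at heq

lemma Efin_card {k n : ℕ} {ν : ℕ → ℕ} (hν0 : ν 0 = 0) (hνtop : ν (k + 1) = n)
    (hmono : ∀ i ≤ k, ν i < ν (i + 1)) :
    (Efin k n ν).card = ∑ i ∈ Finset.Icc 1 k, (ν (i + 1) - ν (i - 1)) := by
  have hub : ∀ l, l ≤ k → ν l < n := by
    intro l hl
    have h1 := hmono l hl
    have h2 : ν (l + 1) ≤ ν (k + 1) := nu_mono hmono (by omega) le_rfl
    omega
  rw [Efin, Finset.card_biUnion]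
  · apply Finset.sum_congr rfl
    intro l hl
    rw [Finset.mem_Icc] at hl
    have h1 : ν (l - 1) < ν l := nu_strict hmono (by omega) (by omega)
    have h2 : ν l < ν (l + 1) := hmono l hl.2
    have h3 := hub l hl.2
    have h4 : ν (l + 1) ≤ n := by rw [← hνtop]; exact nu_mono hmono (by omega) le_rfl
    have hd : Disjoint ((Finset.Ico (ν (l - 1)) (ν l)).image fun x => (true, x, n - ν l))
        ((Finset.Ico (n - ν (l + 1)) (n - ν l)).image fun y => (false, ν l, y)) := by
      simp only [Finset.disjoint_left, Finset.mem_image]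
      rintro e ⟨x, hx, rfl⟩ ⟨y, hy, heq⟩
      simp at heq
    rw [Finset.card_union_of_disjoint hd,
      Finset.card_image_of_injective _ (fun a b hab => by simpa using hab),
      Finset.card_image_of_injective _ (fun a b hab => by simpa using hab),
      Nat.card_Ico, Nat.card_Ico]
    omega
  · intro l1 h1 l2 h2 hne
    rw [Finset.coe_Icc, Set.mem_Icc] at h1 h2
    have hinj : ν l1 ≠ ν l2 := by
      rcases lt_or_gt_of_ne hne with h | h
      · exact Nat.ne_of_lt (nu_strict hmono h (by omega))
      · exact Nat.ne_of_gt (nu_strict hmono h (by omega))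
    have hv1 := hub l1 h1.2
    have hv2 := hub l2 h2.2
    simp only [Function.onFun, Finset.disjoint_left, Finset.mem_union, Finset.mem_image]
    rintro e (⟨x, hx, rfl⟩ | ⟨y, hy, rfl⟩) hcon
    · rcases hcon with ⟨x', hx', heq⟩ | ⟨y', hy', heq⟩
      · have : n - ν l2 = n - ν l1 := by
          have := congrArg (fun p => p.2.2) heq
          simpa using this
        omega
      · simp at heq
    · rcases hcon with ⟨x', hx', heq⟩ | ⟨y', hy', heq⟩
      · simp at heq
      · have : ν l2 = ν l1 := by
          have := congrArg (fun p => p.2.1) heq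
          simpa using this
        omega

/-- The number of edges on the roof of `Λ(n_1,…,n_k;n)` equals
`Σ_{i=1}^{k} (n_{i+1} − n_{i−1})`, and for each `1 ≤ i ≤ k` there are exactly
`n_{i+1} − n_{i−1}` special paths ending at the corner `O_i` (i.e. with `ν i` horizontal
steps). -/
theorem roof_edges_and_special_paths (k n : ℕ) (ν : ℕ → ℕ) (hν0 : ν 0 = 0)
    (hνtop : ν (k + 1) = n) (hmono : ∀ i ≤ k, ν i < ν (i + 1)) :
    Nat.card {e : Bool × ℕ × ℕ // RoofEdge k n ν e.1 e.2.1 e.2.2} =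
      ∑ i ∈ Finset.Icc 1 k, (ν (i + 1) - ν (i - 1)) ∧
    ∀ i, 1 ≤ i → i ≤ k →
      Nat.card {S : Finset ℕ //
          S ⊆ Finset.Icc 1 n ∧ S.card = ν i ∧ IsSpecialPath k n ν S} =
        ν (i + 1) - ν (i - 1) := by
  constructor
  · calc Nat.card {e : Bool × ℕ × ℕ // RoofEdge k n ν e.1 e.2.1 e.2.2}
        = Nat.card {e : Bool × ℕ × ℕ // e ∈ Efin k n ν} :=
          Nat.card_congr (Equiv.subtypeEquivRight (roof_iff hν0 hνtop hmono))
      _ = (Efin k n ν).card := Nat.card_eq_finsetCard _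
      _ = _ := Efin_card hν0 hνtop hmono
  · intro i hi1 hik
    calc Nat.card {S : Finset ℕ //
          S ⊆ Finset.Icc 1 n ∧ S.card = ν i ∧ IsSpecialPath k n ν S}
        = Nat.card {S : Finset ℕ // S ∈ Ffin k n ν i} :=
          Nat.card_congr (Equiv.subtypeEquivRight (special_iff hν0 hνtop hmono hi1 hik))
      _ = (Ffin k n ν i).card := Nat.card_eq_finsetCard _
      _ = _ := Ffin_card hν0 hνtop hmono hi1 hik
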